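/- If a graph G has a {P2,P5}-factor, then for every subset X of V(G), c1(G−X) + (1/2)·c3(G−X) ≤ (3/2)·|X|, where c_i(H) denotes the number of components of H with exactly i vertices. -/

import Mathlib

open SimpleGraph

/-- `cCount H i` is the number of connected components of `H` with exactly `i` vertices. -/
noncomputable def cCount {V : Type*} (H : SimpleGraph V) (i : ℕ) : ℕ :=
  Nat.card {c : H.ConnectedComponent // Nat.card c.supp = i}

/-- The component `c` of `F` is (induces) a path of order `n`. -/
def IsPathComp {V : Type*} (F : SimpleGraph V) (n : ℕ) (c : F.ConnectedComponent) : Prop :=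
  Nonempty ((SimpleGraph.induce c.supp F) ≃g SimpleGraph.pathGraph n)

/-- `G` has a spanning subgraph each of whose components is a path of order in `ns`. -/
def HasPathFamilyFactor {V : Type*} (G : SimpleGraph V) (ns : Set ℕ) : Prop :=
  ∃ F ≤ G, ∀ c : F.ConnectedComponent, ∃ n ∈ ns, IsPathComp F n c

/-- `F` is a path-factor of `G`: a spanning subgraph each of whose components is a
path of order at least `2`. -/
def IsPathFactor {V : Type*} (G F : SimpleGraph V) : Prop :=
  F ≤ G ∧ ∀ c : F.ConnectedComponent, ∃ n, 2 ≤ n ∧ IsPathComp F n c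

/-- The neighbourhood `N_G(X)`: vertices outside `X` adjacent to some vertex of `X`. -/
def nbhd {V : Type*} (G : SimpleGraph V) (X : Set V) : Set V :=
  {v | v ∉ X ∧ ∃ u ∈ X, G.Adj u v}


namespace PF
open SimpleGraph
variable {V : Type*} {F : SimpleGraph V}

noncomputable def ppos (nn : F.ConnectedComponent → ℕ)
    (em : ∀ d : F.ConnectedComponent, (induce d.supp F) ≃g pathGraph (nn d)) (v : V) : ℕ :=
  (em (F.connectedComponentMk v)
    ⟨v, (ConnectedComponent.mem_supp_iff _ _).mpr rfl⟩).val

variable (nn : F.ConnectedComponent → ℕ)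
    (em : ∀ d : F.ConnectedComponent, (induce d.supp F) ≃g pathGraph (nn d))

lemma ppos_eq {v : V} {d : F.ConnectedComponent} (h : F.connectedComponentMk v = d) :
    ppos nn em v = (em d ⟨v, (ConnectedComponent.mem_supp_iff _ _).mpr h⟩).val := by
  subst h; rfl

lemma ppos_lt (v : V) : ppos nn em v < nn (F.connectedComponentMk v) := Fin.is_lt _

lemma ppos_inj {v w : V} (h : F.connectedComponentMk w = F.connectedComponentMk v)
    (hp : ppos nn em v = ppos nn em w) : v = w := by
  rw [ppos_eq nn em rfl, ppos_eq nn em h] at hp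
  have := (em (F.connectedComponentMk v)).injective (Fin.ext hp)
  exact congrArg Subtype.val this

lemma adj_mk {v w : V} (h : F.Adj v w) :
    F.connectedComponentMk w = F.connectedComponentMk v :=
  ConnectedComponent.sound h.symm.reachable

lemma adj_ppos {v w : V} (h : F.Adj v w) :
    ppos nn em v + 1 = ppos nn em w ∨ ppos nn em w + 1 = ppos nn em v := by
  have hd := adj_mk h
  have h1 : (induce (F.connectedComponentMk v).supp F).Adj
      ⟨v, (ConnectedComponent.mem_supp_iff _ _).mpr rfl⟩
      ⟨w, (ConnectedComponent.mem_supp_iff _ _).mpr hd⟩ := by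
    simpa [comap_adj] using h
  have h2 := (em (F.connectedComponentMk v)).map_adj_iff.mpr h1
  rw [pathGraph_adj] at h2
  rw [ppos_eq nn em rfl, ppos_eq nn em hd]
  exact h2

lemma exists_adj {v : V} {j : ℕ} (hj : j < nn (F.connectedComponentMk v))
    (hadj : ppos nn em v + 1 = j ∨ j + 1 = ppos nn em v) :
    ∃ w, F.Adj v w ∧ ppos nn em w = j := by
  set d := F.connectedComponentMk v with hdv
  set w' := (em d).symm ⟨j, hj⟩ with hw'
  have hmem : w'.val ∈ d.supp := w'.2
  have hmk : F.connectedComponentMk w'.val = d :=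
    (ConnectedComponent.mem_supp_iff _ _).mp hmem
  have hpw : ppos nn em w'.val = j := by
    rw [ppos_eq nn em hmk]
    have : (⟨w'.val, (ConnectedComponent.mem_supp_iff _ _).mpr hmk⟩ : d.supp) = w' :=
      Subtype.ext rfl
    rw [this, hw', (em d).apply_symm_apply]
  have hpadj : (pathGraph (nn d)).Adj
      (em d ⟨v, (ConnectedComponent.mem_supp_iff _ _).mpr rfl⟩) ⟨j, hj⟩ := by
    rw [pathGraph_adj]
    have := (ppos_eq nn em (rfl : F.connectedComponentMk v = d)).symm
    exact hadj
  have h2 : (induce d.supp F).Adj ⟨v, (ConnectedComponent.mem_supp_iff _ _).mpr rfl⟩ w' := by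
    rw [← (em d).map_adj_iff]
    simpa [hw'] using hpadj
  refine ⟨w'.val, ?_, hpw⟩
  simpa [comap_adj] using h2

lemma card_supp {n : ℕ} {d : F.ConnectedComponent}
    (e : (induce d.supp F) ≃g pathGraph n) : Nat.card d.supp = n := by
  have := Nat.card_congr e.toEquiv
  simpa using this


def IsEnd (v : V) : Prop :=
  ppos nn em v = 0 ∨ ppos nn em v + 1 = nn (F.connectedComponentMk v)

def Giv (X : Set V) (v x : V) (s : ℕ) : Prop :=
  x ∈ X ∧ F.Adj v x ∧
    ((IsEnd nn em v ∧ ((ppos nn em v + 1 = ppos nn em x ∧ s ≤ 1) ∨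
        (ppos nn em x + 1 = ppos nn em v ∧ 1 ≤ s ∧ s ≤ 2))) ∨
     (¬ IsEnd nn em v ∧ ((ppos nn em v + 1 = ppos nn em x ∧ s = 0) ∨
        (ppos nn em x + 1 = ppos nn em v ∧ s = 2))))

lemma giv_unique (hnn : ∀ d, nn d = 2 ∨ nn d = 5) {X : Set V} {v1 v2 x : V} {s : ℕ}
    (h1 : Giv nn em X v1 x s) (h2 : Giv nn em X v2 x s) : v1 = v2 := by
  obtain ⟨-, ha1, hc1⟩ := h1
  obtain ⟨-, ha2, hc2⟩ := h2
  by_contra hne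
  have hd1 : F.connectedComponentMk x = F.connectedComponentMk v1 := adj_mk ha1
  have hd2 : F.connectedComponentMk x = F.connectedComponentMk v2 := adj_mk ha2
  have hpne : ppos nn em v1 ≠ ppos nn em v2 := fun hp =>
    hne (ppos_inj nn em (hd2.symm.trans hd1) hp)
  have e1 : nn (F.connectedComponentMk v1) = nn (F.connectedComponentMk x) := by rw [hd1]
  have e2 : nn (F.connectedComponentMk v2) = nn (F.connectedComponentMk x) := by rw [hd2]
  have l1 := ppos_lt nn em v1
  have l2 := ppos_lt nn em v2
  have lx := ppos_lt nn em x
  rw [e1] at l1; rw [e2] at l2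
  have hn := hnn (F.connectedComponentMk x)
  simp only [IsEnd, e1, e2] at hc1 hc2
  omega

lemma exists_giv {X : Set V} {v x : V} (hx : x ∈ X) (ha : F.Adj v x) :
    ∃ s, s < 3 ∧ Giv nn em X v x s := by
  rcases adj_ppos nn em ha with hdir | hdir
  · by_cases he : IsEnd nn em v
    · exact ⟨1, by omega, hx, ha, Or.inl ⟨he, Or.inl ⟨hdir, by omega⟩⟩⟩
    · exact ⟨0, by omega, hx, ha, Or.inr ⟨he, Or.inl ⟨hdir, rfl⟩⟩⟩
  · by_cases he : IsEnd nn em v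
    · exact ⟨1, by omega, hx, ha, Or.inl ⟨he, Or.inr ⟨hdir, by omega, by omega⟩⟩⟩
    · exact ⟨2, by omega, hx, ha, Or.inr ⟨he, Or.inr ⟨hdir, rfl⟩⟩⟩

variable {G : SimpleGraph V} {X : Set V}

lemma comp_closed (hFG : F ≤ G) {c : (induce Xᶜ G).ConnectedComponent}
    {u : ↥Xᶜ} (hu : u ∈ c.supp) {w : V} (hw : w ∈ Xᶜ) (ha : F.Adj ↑u w) :
    (⟨w, hw⟩ : ↥Xᶜ) ∈ c.supp := by
  have hadj : (induce Xᶜ G).Adj u ⟨w, hw⟩ := by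
    simp only [comap_adj]
    exact hFG ha
  rw [ConnectedComponent.mem_supp_iff] at hu ⊢
  rw [← hu]
  exact ConnectedComponent.sound hadj.symm.reachable

lemma walk_closed (hFG : F ≤ G) {c : (induce Xᶜ G).ConnectedComponent}
    (hX : ∀ (u : ↥Xᶜ), u ∈ c.supp → ∀ x, F.Adj ↑u x → x ∉ X)
    {v w : V} (p : F.Walk v w) (hv : ∃ h : v ∈ Xᶜ, (⟨v, h⟩ : ↥Xᶜ) ∈ c.supp) :
    ∃ h : w ∈ Xᶜ, (⟨w, h⟩ : ↥Xᶜ) ∈ c.supp := by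
  induction p with
  | nil => exact hv
  | cons ha p ih =>
      obtain ⟨h1, h2⟩ := hv
      have hw : _ ∈ Xᶜ := hX ⟨_, h1⟩ h2 _ ha
      exact ih ⟨hw, comp_closed hFG h2 hw ha⟩


include em in
lemma c3_giver [Fintype V] (hFG : F ≤ G) (hnn : ∀ d, nn d = 2 ∨ nn d = 5)
    {c : (induce Xᶜ G).ConnectedComponent} (hc : Nat.card c.supp = 3) :
    ∃ v : V, (∃ hv : v ∈ Xᶜ, (⟨v, hv⟩ : ↥Xᶜ) ∈ c.supp) ∧ ∃ x ∈ X, F.Adj v x := by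
  by_contra hcon
  push_neg at hcon
  have hX : ∀ (u : ↥Xᶜ), u ∈ c.supp → ∀ x, F.Adj ↑u x → x ∉ X := by
    intro u hu x ha hxX
    exact hcon ↑u ⟨u.2, hu⟩ x hxX ha
  set S : Set V := {v | ∃ h : v ∈ Xᶜ, (⟨v, h⟩ : ↥Xᶜ) ∈ c.supp} with hS
  have key : ∀ v ∈ S, (F.connectedComponentMk v).supp ⊆ S := by
    intro v hv w hw
    have hr : F.Reachable v w :=
      (ConnectedComponent.exact ((ConnectedComponent.mem_supp_iff _ _).mp hw)).symm
    exact walk_closed hFG hX hr.some hv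
  have hS3 : S.ncard = 3 := by
    have hSeq : S = Subtype.val '' c.supp := by
      ext v
      constructor
      · rintro ⟨h1, h2⟩; exact ⟨⟨v, h1⟩, h2, rfl⟩
      · rintro ⟨u, hu, rfl⟩; exact ⟨u.2, hu⟩
    rw [hSeq, Set.ncard_image_of_injective _ Subtype.val_injective,
      ← Nat.card_coe_set_eq, hc]
  have hcsupp : ∀ v ∈ S, (F.connectedComponentMk v).supp.ncard = 2 ∨
      (F.connectedComponentMk v).supp.ncard = 5 := by
    intro v _
    have h2 := card_supp (em (F.connectedComponentMk v))
    rw [Nat.card_coe_set_eq] at h2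
    rw [h2]
    exact hnn _
  have hSne : S.Nonempty := Set.nonempty_of_ncard_ne_zero (by omega)
  obtain ⟨v0, hv0⟩ := hSne
  have h0 : (F.connectedComponentMk v0).supp ⊆ S := key v0 hv0
  have hle0 : (F.connectedComponentMk v0).supp.ncard ≤ 3 := by
    rw [← hS3]; exact Set.ncard_le_ncard h0 S.toFinite
  have hn0 : (F.connectedComponentMk v0).supp.ncard = 2 := by
    rcases hcsupp v0 hv0 with h | h <;> omega
  have hne : ¬ S ⊆ (F.connectedComponentMk v0).supp := by
    intro hsub
    have := Set.ncard_le_ncard hsub (Set.toFinite _)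
    omega
  obtain ⟨v1, hv1S, hv1n⟩ := Set.not_subset.mp hne
  have h1 : (F.connectedComponentMk v1).supp ⊆ S := key v1 hv1S
  have hdisj : Disjoint (F.connectedComponentMk v1).supp (F.connectedComponentMk v0).supp := by
    rw [Set.disjoint_left]
    intro a ha1 ha0
    rw [ConnectedComponent.mem_supp_iff] at ha1 ha0
    exact hv1n ((ConnectedComponent.mem_supp_iff _ _).mpr (ha1 ▸ ha0 ▸ rfl : _))
  have hun : (F.connectedComponentMk v1).supp ∪ (F.connectedComponentMk v0).supp ⊆ S :=
    Set.union_subset h1 h0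
  have hcard := Set.ncard_le_ncard hun S.toFinite
  rw [Set.ncard_union_eq hdisj (Set.toFinite _) (Set.toFinite _)] at hcard
  rcases hcsupp v1 hv1S with h | h <;> omega

lemma c3_targets [Fintype V] (hFG : F ≤ G) (hnn : ∀ d, nn d = 2 ∨ nn d = 5)
    {c : (induce Xᶜ G).ConnectedComponent} (hc : Nat.card c.supp = 3) :
    ∃ (v x : V) (s : ℕ), (∃ hv : v ∈ Xᶜ, (⟨v, hv⟩ : ↥Xᶜ) ∈ c.supp) ∧ s < 3 ∧
      Giv nn em X v x s := by
  obtain ⟨v, hmem, x, hxX, ha⟩ := c3_giver nn em hFG hnn hc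
  obtain ⟨s, hs, hgiv⟩ := exists_giv nn em hxX ha
  exact ⟨v, x, s, hmem, hs, hgiv⟩

lemma isolated_nbrs (hFG : F ≤ G)
    {c : (induce Xᶜ G).ConnectedComponent} (hc : Nat.card c.supp = 1) :
    ∃ v : V, (∃ hv : v ∈ Xᶜ, (⟨v, hv⟩ : ↥Xᶜ) ∈ c.supp) ∧ ∀ w, F.Adj v w → w ∈ X := by
  rw [Nat.card_coe_set_eq, Set.ncard_eq_one] at hc
  obtain ⟨u, hu⟩ := hc
  have humem : u ∈ c.supp := by rw [hu]; exact rfl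
  refine ⟨↑u, ⟨u.2, humem⟩, ?_⟩
  intro w hw
  by_contra hwX
  have hwc : w ∈ Xᶜ := hwX
  have hmem : (⟨w, hwc⟩ : ↥Xᶜ) ∈ c.supp := comp_closed hFG humem hwc hw
  rw [hu, Set.mem_singleton_iff] at hmem
  exact hw.ne' (by rw [← hmem])

lemma c1_targets (hFG : F ≤ G) (hnn : ∀ d, nn d = 2 ∨ nn d = 5)
    {c : (induce Xᶜ G).ConnectedComponent} (hc : Nat.card c.supp = 1) :
    ∃ (v x1 x2 : V) (s1 s2 : ℕ), (∃ hv : v ∈ Xᶜ, (⟨v, hv⟩ : ↥Xᶜ) ∈ c.supp) ∧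
      s1 < 3 ∧ s2 < 3 ∧ s1 ≠ s2 ∧ Giv nn em X v x1 s1 ∧ Giv nn em X v x2 s2 := by
  obtain ⟨v, hmem, hiso⟩ := isolated_nbrs hFG hc
  have hn := hnn (F.connectedComponentMk v)
  have hp := ppos_lt nn em v
  by_cases hp0 : ppos nn em v = 0
  · obtain ⟨w, haw, hpw⟩ := exists_adj nn em (v := v) (j := 1) (by omega) (by omega)
    have hwX := hiso w haw
    have hend : IsEnd nn em v := Or.inl hp0
    exact ⟨v, w, w, 0, 1, hmem, by omega, by omega, by omega,
      ⟨hwX, haw, Or.inl ⟨hend, Or.inl ⟨by omega, by omega⟩⟩⟩,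
      ⟨hwX, haw, Or.inl ⟨hend, Or.inl ⟨by omega, by omega⟩⟩⟩⟩
  · by_cases hpn : ppos nn em v + 1 = nn (F.connectedComponentMk v)
    · obtain ⟨w, haw, hpw⟩ := exists_adj nn em (v := v) (j := ppos nn em v - 1)
        (by omega) (by omega)
      have hwX := hiso w haw
      have hend : IsEnd nn em v := Or.inr hpn
      exact ⟨v, w, w, 1, 2, hmem, by omega, by omega, by omega,
        ⟨hwX, haw, Or.inl ⟨hend, Or.inr ⟨by omega, by omega, by omega⟩⟩⟩,
        ⟨hwX, haw, Or.inl ⟨hend, Or.inr ⟨by omega, by omega, by omega⟩⟩⟩⟩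
    · obtain ⟨w1, ha1, hpw1⟩ := exists_adj nn em (v := v) (j := ppos nn em v - 1)
        (by omega) (by omega)
      obtain ⟨w2, ha2, hpw2⟩ := exists_adj nn em (v := v) (j := ppos nn em v + 1)
        (by omega) (by omega)
      have hnend : ¬ IsEnd nn em v := by
        rintro (h | h) <;> omega
      exact ⟨v, w1, w2, 2, 0, hmem, by omega, by omega, by omega,
        ⟨hiso w1 ha1, ha1, Or.inr ⟨hnend, Or.inr ⟨by omega, rfl⟩⟩⟩,
        ⟨hiso w2 ha2, ha2, Or.inr ⟨hnend, Or.inl ⟨by omega, rfl⟩⟩⟩⟩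

lemma comp_eq_of_giver_eq {c c' : (induce Xᶜ G).ConnectedComponent} {v v' : V}
    (h1 : ∃ hv : v ∈ Xᶜ, (⟨v, hv⟩ : ↥Xᶜ) ∈ c.supp)
    (h2 : ∃ hv : v' ∈ Xᶜ, (⟨v', hv⟩ : ↥Xᶜ) ∈ c'.supp) (hvv : v = v') : c = c' := by
  subst hvv
  obtain ⟨a, ha⟩ := h1
  obtain ⟨b, hb⟩ := h2
  rw [ConnectedComponent.mem_supp_iff] at ha hb
  rw [← ha, ← hb]

end PF


theorem stmt2 {V : Type*} [Fintype V] (G : SimpleGraph V)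
    (h : HasPathFamilyFactor G {2, 5}) (X : Set V) :
    (cCount (SimpleGraph.induce Xᶜ G) 1 : ℚ) + (1 / 2) * cCount (SimpleGraph.induce Xᶜ G) 3 ≤
      (3 / 2) * X.ncard := by
  classical
  obtain ⟨F, hFG, hcomp⟩ := h
  choose nn hnmem hiso using hcomp
  have hnn : ∀ d, nn d = 2 ∨ nn d = 5 := fun d => by simpa using hnmem d
  let em : ∀ d : F.ConnectedComponent, (induce d.supp F) ≃g pathGraph (nn d) :=
    fun d => (hiso d).some
  have hA := fun c : {c : (induce Xᶜ G).ConnectedComponent // Nat.card c.supp = 1} =>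
    PF.c1_targets nn em hFG hnn c.2
  choose v1 x1 x2 s1 s2 hmem1 hs1 hs2 hne12 g1 g2 using hA
  have hB := fun c : {c : (induce Xᶜ G).ConnectedComponent // Nat.card c.supp = 3} =>
    PF.c3_targets nn em hFG hnn c.2
  choose v3 x3 s3 hmem3 hs3 g3 using hB
  let f : ({c : (induce Xᶜ G).ConnectedComponent // Nat.card c.supp = 1} × Bool) ⊕
      {c : (induce Xᶜ G).ConnectedComponent // Nat.card c.supp = 3} → ↥X × Fin 3 := fun e =>
    match e with
    | .inl (c, false) => (⟨x1 c, (g1 c).1⟩, ⟨s1 c, hs1 c⟩)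
    | .inl (c, true) => (⟨x2 c, (g2 c).1⟩, ⟨s2 c, hs2 c⟩)
    | .inr c => (⟨x3 c, (g3 c).1⟩, ⟨s3 c, hs3 c⟩)
  have hfinj : Function.Injective f := by
    rintro (⟨c, _ | _⟩ | c) (⟨c', _ | _⟩ | c') heq <;>
      simp only [f, Prod.mk.injEq, Subtype.mk.injEq, Fin.mk.injEq] at heq
    · have g' := g1 c'
      rw [← heq.1, ← heq.2] at g'
      have hcc : c.1 = c'.1 :=
        PF.comp_eq_of_giver_eq (hmem1 c) (hmem1 c') (PF.giv_unique nn em hnn (g1 c) g')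
      have hc : c = c' := Subtype.ext hcc
      rw [hc]
    · have g' := g2 c'
      rw [← heq.1, ← heq.2] at g'
      have hcc : c.1 = c'.1 :=
        PF.comp_eq_of_giver_eq (hmem1 c) (hmem1 c') (PF.giv_unique nn em hnn (g1 c) g')
      have hc : c = c' := Subtype.ext hcc
      subst hc
      exact absurd heq.2 (hne12 c)
    · have g' := g3 c'
      rw [← heq.1, ← heq.2] at g'
      have hcc : c.1 = c'.1 :=
        PF.comp_eq_of_giver_eq (hmem1 c) (hmem3 c') (PF.giv_unique nn em hnn (g1 c) g')
      have h1 := c.2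
      rw [hcc, c'.2] at h1
      omega
    · have g' := g1 c'
      rw [← heq.1, ← heq.2] at g'
      have hcc : c.1 = c'.1 :=
        PF.comp_eq_of_giver_eq (hmem1 c) (hmem1 c') (PF.giv_unique nn em hnn (g2 c) g')
      have hc : c = c' := Subtype.ext hcc
      subst hc
      exact absurd heq.2.symm (hne12 c)
    · have g' := g2 c'
      rw [← heq.1, ← heq.2] at g'
      have hcc : c.1 = c'.1 :=
        PF.comp_eq_of_giver_eq (hmem1 c) (hmem1 c') (PF.giv_unique nn em hnn (g2 c) g')
      have hc : c = c' := Subtype.ext hcc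
      rw [hc]
    · have g' := g3 c'
      rw [← heq.1, ← heq.2] at g'
      have hcc : c.1 = c'.1 :=
        PF.comp_eq_of_giver_eq (hmem1 c) (hmem3 c') (PF.giv_unique nn em hnn (g2 c) g')
      have h1 := c.2
      rw [hcc, c'.2] at h1
      omega
    · have g' := g1 c'
      rw [← heq.1, ← heq.2] at g'
      have hcc : c.1 = c'.1 :=
        PF.comp_eq_of_giver_eq (hmem3 c) (hmem1 c') (PF.giv_unique nn em hnn (g3 c) g')
      have h1 := c.2
      rw [hcc, c'.2] at h1
      omega
    · have g' := g2 c'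
      rw [← heq.1, ← heq.2] at g'
      have hcc : c.1 = c'.1 :=
        PF.comp_eq_of_giver_eq (hmem3 c) (hmem1 c') (PF.giv_unique nn em hnn (g3 c) g')
      have h1 := c.2
      rw [hcc, c'.2] at h1
      omega
    · have g' := g3 c'
      rw [← heq.1, ← heq.2] at g'
      have hcc : c.1 = c'.1 :=
        PF.comp_eq_of_giver_eq (hmem3 c) (hmem3 c') (PF.giv_unique nn em hnn (g3 c) g')
      have hc : c = c' := Subtype.ext hcc
      rw [hc]
  have hle := Nat.card_le_card_of_injective f hfinj
  have hbool : Nat.card Bool = 2 := by simp [Nat.card_eq_fintype_card]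
  rw [Nat.card_sum, Nat.card_prod, Nat.card_prod, hbool] at hle
  have ht3 : Nat.card (Fin 3) = 3 := by simp
  have htX : Nat.card ↥X = X.ncard := Nat.card_coe_set_eq X
  rw [ht3, htX] at hle
  have e1 : Nat.card {c : (induce Xᶜ G).ConnectedComponent // Nat.card c.supp = 1} =
      cCount (SimpleGraph.induce Xᶜ G) 1 := rfl
  have e3 : Nat.card {c : (induce Xᶜ G).ConnectedComponent // Nat.card c.supp = 3} =
      cCount (SimpleGraph.induce Xᶜ G) 3 := rfl
  rw [e1, e3] at hle
  have hq : (cCount (SimpleGraph.induce Xᶜ G) 1 : ℚ) * 2 + cCount (SimpleGraph.induce Xᶜ G) 3 ≤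
      (X.ncard : ℚ) * 3 := by exact_mod_cast hle
  linarith
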